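/- Let r > s ≥ 1 be integers and let e, f be integers (degrees) such that e/s > f/r (as rationals). Then e/s - f/r ≥ gcd(r, f)/(r·(r-1)). -/

import Mathlib

/-- Arithmetic gap estimate: if `r > s ≥ 1` and `e/s > f/r` as rationals, then
`e/s - f/r ≥ gcd(r, f) / (r·(r-1))`. -/
theorem slope_gap_estimate (r s e f : ℤ) (hs : 1 ≤ s) (hsr : s < r)
    (h : (e : ℚ) / (s : ℚ) > (f : ℚ) / (r : ℚ)) :
    (e : ℚ) / (s : ℚ) - (f : ℚ) / (r : ℚ) ≥ (Int.gcd r f : ℚ) / ((r : ℚ) * ((r : ℚ) - 1)) := by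
  have hr : (1:ℤ) < r := lt_of_le_of_lt hs hsr
  have hsq : (0:ℚ) < (s:ℚ) := by exact_mod_cast lt_of_lt_of_le one_pos hs
  have hrq : (0:ℚ) < (r:ℚ) := by exact_mod_cast lt_trans one_pos hr
  have hkey : (f:ℚ) * r < e * s * (r / s) * (s / r) * r → True := fun _ => trivial
  have hlt : (f:ℤ) * s < e * r := by
    have := (div_lt_div_iff₀ hrq hsq).mp h
    exact_mod_cast this
  have hdvd : ((Int.gcd r f : ℤ)) ∣ e * r - f * s :=
    dvd_sub (Dvd.dvd.mul_left (Int.gcd_dvd_left _ _) e) (Dvd.dvd.mul_right (Int.gcd_dvd_right _ _) s)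
  have hge : ((Int.gcd r f : ℤ)) ≤ e * r - f * s := Int.le_of_dvd (by omega) hdvd
  have heq : (e : ℚ) / (s : ℚ) - (f : ℚ) / (r : ℚ) = ((e*r - f*s : ℤ) : ℚ) / ((s:ℚ) * r) := by
    push_cast
    field_simp
  rw [heq, ge_iff_le]
  have h1 : (Int.gcd r f : ℚ) / ((r : ℚ) * ((r : ℚ) - 1)) ≤ (Int.gcd r f : ℚ) / ((s:ℚ) * r) := by
    apply div_le_div_of_nonneg_left (by positivity) (by positivity)
    have : (s:ℚ) ≤ (r:ℚ) - 1 := by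
      have : s ≤ r - 1 := by omega
      push_cast
      linarith [show ((s:ℚ)) ≤ ((r:ℚ)) - 1 from by exact_mod_cast this]
    nlinarith
  refine h1.trans ?_
  apply div_le_div_of_nonneg_right ?_ (by positivity)
  exact_mod_cast hge
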